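/- Let P be a finite poset and R a consistent restriction function on P, and let φ : Inc_R(P) → J(Γ(P,R)) be the bijection φ(f) = {(p,k) ∈ Γ(P,R) : f(p) ≤ k}. For i ∈ ℤ, let T^i : J(Γ(P,R)) → J(Γ(P,R)) be the composition, in any order, of the toggles t_{(p,i)} over all p ∈ P with (p,i) ∈ Γ(P,R) (these toggles pairwise commute). Then φ(ρ_i(f)) = T^i(φ(f)) for every i ∈ ℤ and every f ∈ Inc_R(P); consequently φ(Pro(f)) = TogPro_{H_Γ}(φ(f)) for all f ∈ Inc_R(P), where H_Γ : Γ(P,R) → ℤ is the toggle order taking (p,k) to k. -/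

import Mathlib

/-- An increasing labeling of the finite poset `P` with respect to the
restriction function `R`. -/
def IncLabel {P : Type*} [PartialOrder P] (R : P → Finset ℤ) (f : P → ℤ) : Prop :=
  (∀ p, f p ∈ R p) ∧ ∀ ⦃p₁ p₂ : P⦄, p₁ < p₂ → f p₁ < f p₂

/-- `R` is consistent: minima and maxima of the label sets strictly increase
along covering relations. -/
def Consistent {P : Type*} [PartialOrder P] (R : P → Finset ℤ)
    (hR : ∀ p, (R p).Nonempty) : Prop :=
  ∀ x y : P, x ⋖ y →
    (R x).min' (hR x) < (R y).min' (hR y) ∧ (R x).max' (hR x) < (R y).max' (hR y)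

/-- The underlying set of `Γ(P,R)`: pairs `(p,k)` with `k ∈ R(p)`,
`k ≠ max R(p)`. -/
def GammaSet {P : Type*} [PartialOrder P] (R : P → Finset ℤ)
    (hR : ∀ p, (R p).Nonempty) : Type _ :=
  {x : P × ℤ // x.2 ∈ R x.1 ∧ x.2 ≠ (R x.1).max' (hR x.1)}

/-- The generating relation of `Γ(P,R)`. -/
def GammaRel {P : Type*} [PartialOrder P] (R : P → Finset ℤ)
    (hR : ∀ p, (R p).Nonempty) : GammaSet R hR → GammaSet R hR → Prop := fun a b =>
  (a.1.1 = b.1.1 ∧ b.1.2 < a.1.2 ∧ ∀ k ∈ R a.1.1, b.1.2 < k → a.1.2 ≤ k) ∨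
  (a.1.1 ⋖ b.1.1 ∧ a.1.2 < b.1.2 ∧ (∀ k ∈ R a.1.1, k < b.1.2 → k ≤ a.1.2) ∧
    ¬ ∃ k ∈ R b.1.1, b.1.2 < k ∧ a.1.2 < k ∧ ∀ k' ∈ R a.1.1, k' < k → k' ≤ a.1.2)

/-- Order ideals of `Γ(P,R)` with respect to the reflexive-transitive closure
of the generating relation. -/
def IsIdealG {P : Type*} [PartialOrder P] (R : P → Finset ℤ)
    (hR : ∀ p, (R p).Nonempty) (I : Set (GammaSet R hR)) : Prop :=
  ∀ ⦃x y : GammaSet R hR⦄, Relation.ReflTransGen (GammaRel R hR) x y → y ∈ I → x ∈ I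

open Classical in
/-- The toggle `t_x` on (sets of) elements of `Γ(P,R)`: replace `I` by the
symmetric difference `I ∆ {x}` if that set is an order ideal, and do nothing
otherwise. -/
noncomputable def toggleG {P : Type*} [PartialOrder P] (R : P → Finset ℤ)
    (hR : ∀ p, (R p).Nonempty) (x : GammaSet R hR) (I : Set (GammaSet R hR)) :
    Set (GammaSet R hR) :=
  if IsIdealG R hR (symmDiff I {x}) then symmDiff I {x} else I

open Classical in
/-- `R(p)_{>i}`: the smallest label of `R(p)` greater than `i`
(defaulting to `i` when there is none). -/
noncomputable def Rgt {P : Type*} [PartialOrder P] (R : P → Finset ℤ)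
    (p : P) (i : ℤ) : ℤ :=
  if h : ((R p).filter fun k => i < k).Nonempty
  then ((R p).filter fun k => i < k).min' h else i

open Classical in
/-- The `i`-th generalized Bender-Knuth involution `ρ_i` on `Inc_R(P)`:
change a label `i` at `p` to `R(p)_{>i}` and a label `R(p)_{>i}` to `i`,
wherever possible. -/
noncomputable def gbk {P : Type*} [PartialOrder P] [DecidableEq P]
    (R : P → Finset ℤ) (i : ℤ) (f : P → ℤ) : P → ℤ := fun p =>
  if f p = i ∧ IncLabel R (Function.update f p (Rgt R p i)) then Rgt R p i
  else if f p = Rgt R p i ∧ IncLabel R (Function.update f p i) then i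
  else f p

set_option linter.unusedSectionVars false
set_option maxHeartbeats 1000000

section BK

attribute [local instance] Classical.propDecidable

variable {P : Type*} [PartialOrder P] [DecidableEq P]
  (R : P → Finset ℤ) (hR : ∀ p, (R p).Nonempty)

lemma Rgt_le {p : P} {i k : ℤ} (hk : k ∈ R p) (hik : i < k) : Rgt R p i ≤ k := by
  have hne : ((R p).filter fun k => i < k).Nonempty := ⟨k, Finset.mem_filter.2 ⟨hk, hik⟩⟩
  rw [Rgt, dif_pos hne]
  exact Finset.min'_le _ _ (Finset.mem_filter.2 ⟨hk, hik⟩)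

lemma le_Rgt (p : P) (i : ℤ) : i ≤ Rgt R p i := by
  rw [Rgt]
  split
  · rename_i h
    have := Finset.min'_mem _ h
    exact (Finset.mem_filter.1 this).2.le
  · exact le_rfl

lemma Rgt_mem {p : P} {i k : ℤ} (hk : k ∈ R p) (hik : i < k) :
    Rgt R p i ∈ R p ∧ i < Rgt R p i := by
  have hne : ((R p).filter fun k => i < k).Nonempty := ⟨k, Finset.mem_filter.2 ⟨hk, hik⟩⟩
  rw [Rgt, dif_pos hne]
  have := Finset.min'_mem _ hne
  rw [Finset.mem_filter] at this
  exact this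

/-- From membership in the Gamma set: there is a bigger element. -/
lemma exists_gt_of_ne_max {p : P} {i : ℤ} (hi : i ∈ R p) (hne : i ≠ (R p).max' (hR p)) :
    ∃ k ∈ R p, i < k :=
  ⟨(R p).max' (hR p), (R p).max'_mem (hR p), lt_of_le_of_ne (Finset.le_max' _ _ hi) hne⟩

lemma isIdealG_iff {I : Set (GammaSet R hR)} :
    IsIdealG R hR I ↔ ∀ ⦃x y : GammaSet R hR⦄, GammaRel R hR x y → y ∈ I → x ∈ I := by
  constructor
  · exact fun h x y hxy => h (Relation.ReflTransGen.single hxy)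
  · intro h x y hxy
    induction hxy with
    | refl => exact id
    | tail _ hbc ih => exact fun hy => ih (h hbc hy)

lemma ideal_of_incLabel {f : P → ℤ} (hf : IncLabel R f) :
    IsIdealG R hR {x : GammaSet R hR | f x.1.1 ≤ x.1.2} := by
  rw [isIdealG_iff]
  rintro x y (⟨heq, hlt, -⟩ | ⟨hcov, hlt, hmax, -⟩) hy
  · simp only [Set.mem_setOf_eq] at hy ⊢
    rw [heq]; omega
  · have h1 : f x.1.1 < f y.1.1 := hf.2 hcov.lt
    exact hmax _ (hf.1 _) (lt_of_lt_of_le h1 hy)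

lemma exists_max_filter {s : Finset ℤ} {Q : ℤ → Prop} {k0 : ℤ} (h0 : k0 ∈ s) (hQ : Q k0) :
    ∃ m, m ∈ s ∧ Q m ∧ k0 ≤ m ∧ ∀ k ∈ s, Q k → k ≤ m := by
  classical
  have hne : (s.filter Q).Nonempty := ⟨k0, Finset.mem_filter.2 ⟨h0, hQ⟩⟩
  have hm := Finset.mem_filter.1 ((s.filter Q).max'_mem hne)
  exact ⟨_, hm.1, hm.2, Finset.le_max' _ _ (Finset.mem_filter.2 ⟨h0, hQ⟩),
    fun k hk hQk => Finset.le_max' _ _ (Finset.mem_filter.2 ⟨hk, hQk⟩)⟩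

lemma covStrict_of_ideal {f : P → ℤ} (hcons : Consistent R hR) (hmem : ∀ p, f p ∈ R p)
    (hI : IsIdealG R hR {x : GammaSet R hR | f x.1.1 ≤ x.1.2}) {p q : P} (hpq : p ⋖ q) :
    f p < f q := by
  by_contra hle
  push_neg at hle
  have hmin : (R p).min' (hR p) < f q := by
    calc (R p).min' (hR p) < (R q).min' (hR q) := (hcons p q hpq).1
      _ ≤ f q := Finset.min'_le _ _ (hmem q)
  obtain ⟨k₁, hk₁R, hk₁lt, -, hk₁max⟩ :=
    exists_max_filter (Q := fun z => z < f q) (Finset.min'_mem _ (hR p)) hmin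
  obtain ⟨k₂, hk₂R, ⟨hk₂gt, hk₂pred⟩, hk₂ge, hk₂max⟩ :=
    exists_max_filter (s := R q) (Q := fun z => k₁ < z ∧ ∀ k' ∈ R p, k' < z → k' ≤ k₁)
      (hmem q) ⟨hk₁lt, hk₁max⟩
  have hk₂le : k₂ ≤ f p := by
    by_contra hc
    push_neg at hc
    have := hk₂pred (f p) (hmem p) hc
    omega
  have hk₁ne : k₁ ≠ (R p).max' (hR p) := by
    have : f p ≤ (R p).max' (hR p) := Finset.le_max' _ _ (hmem p)
    omega
  have hk₂ne : k₂ ≠ (R q).max' (hR q) := by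
    have h3 : f p ≤ (R p).max' (hR p) := Finset.le_max' _ _ (hmem p)
    have h4 := (hcons p q hpq).2
    omega
  have hrel : GammaRel R hR ⟨(p, k₁), hk₁R, hk₁ne⟩ ⟨(q, k₂), hk₂R, hk₂ne⟩ := by
    refine Or.inr ⟨hpq, hk₂gt, hk₂pred, ?_⟩
    rintro ⟨k, hk, hlt₂, -, hall⟩
    have hlt₂' : k₂ < k := hlt₂
    have : k ≤ k₂ := hk₂max k hk ⟨lt_trans hk₂gt hlt₂', hall⟩
    omega
  have hx := hI (Relation.ReflTransGen.single hrel) (show f q ≤ k₂ from hk₂ge)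
  change f p ≤ k₁ at hx
  omega

lemma incLabel_of_ideal [Fintype P] {f : P → ℤ} (hcons : Consistent R hR)
    (hmem : ∀ p, f p ∈ R p)
    (hI : IsIdealG R hR {x : GammaSet R hR | f x.1.1 ≤ x.1.2}) : IncLabel R f := by
  refine ⟨hmem, fun p₁ p₂ h => ?_⟩
  letI : LocallyFiniteOrder P := Fintype.toLocallyFiniteOrder
  have hchain := transGen_covBy_of_lt h
  clear h
  induction hchain with
  | single hcov => exact covStrict_of_ideal R hR hcons hmem hI hcov
  | tail _ hcov ih => exact lt_trans ih (covStrict_of_ideal R hR hcons hmem hI hcov)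

/-- Chains within a column of `Γ`. -/
lemma colChain (p : P) : ∀ (n : ℕ) (k k' : ℤ) (hk : k ∈ R p) (hk' : k' ∈ R p)
    (hkm : k ≠ (R p).max' (hR p)) (hk'm : k' ≠ (R p).max' (hR p)) (_ : k' ≤ k)
    (_ : (k - k').toNat ≤ n),
    Relation.ReflTransGen (GammaRel R hR) ⟨(p, k), hk, hkm⟩ ⟨(p, k'), hk', hk'm⟩ := by
  intro n
  induction n with
  | zero =>
    intro k k' hk hk' hkm hk'm hle hn
    have : k = k' := by omega
    subst this
    exact Relation.ReflTransGen.refl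
  | succ n ih =>
    intro k k' hk hk' hkm hk'm hle hn
    rcases eq_or_lt_of_le hle with heq | hlt
    · subst heq; exact Relation.ReflTransGen.refl
    · obtain ⟨m, hmR, ⟨hm1, hm2⟩, -, hmmax⟩ :=
        exists_max_filter (s := R p) (Q := fun z => k' ≤ z ∧ z < k) hk' ⟨le_rfl, hlt⟩
      have hmne : m ≠ (R p).max' (hR p) := by
        have h1 : k ≤ (R p).max' (hR p) := Finset.le_max' _ _ hk
        omega
      have hrel : GammaRel R hR ⟨(p, k), hk, hkm⟩ ⟨(p, m), hmR, hmne⟩ := by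
        refine Or.inl ⟨rfl, hm2, fun z hz hmz => ?_⟩
        have hmz' : m < z := hmz
        by_contra hc
        push_neg at hc
        have : z ≤ m := hmmax z hz ⟨by omega, hc⟩
        omega
      exact Relation.ReflTransGen.head hrel (ih m k' hmR hk' hmne hk'm hm1 (by omega))

lemma colChain' (p : P) (k k' : ℤ) (hk : k ∈ R p) (hk' : k' ∈ R p)
    (hkm : k ≠ (R p).max' (hR p)) (hk'm : k' ≠ (R p).max' (hR p)) (hle : k' ≤ k) :
    Relation.ReflTransGen (GammaRel R hR) ⟨(p, k), hk, hkm⟩ ⟨(p, k'), hk', hk'm⟩ :=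
  colChain R hR p (k - k').toNat k k' hk hk' hkm hk'm hle le_rfl

lemma not_ideal_lt {g : P → ℤ} (hmem : ∀ q, g q ∈ R q) (x₀ : GammaSet R hR)
    (hlt : g x₀.1.1 < x₀.1.2) :
    ¬ IsIdealG R hR (symmDiff {x : GammaSet R hR | g x.1.1 ≤ x.1.2} {x₀}) := by
  intro hI
  obtain ⟨⟨p, i⟩, hiR, hine⟩ := x₀
  have hlt' : g p < i := hlt
  have hgne : g p ≠ (R p).max' (hR p) := by
    have : i ≤ (R p).max' (hR p) := Finset.le_max' _ _ hiR
    omega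
  have hchain := colChain' R hR p i (g p) hiR (hmem p) hine hgne hlt'.le
  have hy : (⟨(p, g p), hmem p, hgne⟩ : GammaSet R hR) ∈
      symmDiff {x : GammaSet R hR | g x.1.1 ≤ x.1.2} {(⟨(p, i), hiR, hine⟩ : GammaSet R hR)} := by
    apply Set.mem_symmDiff.mpr
    left
    constructor
    · show g p ≤ g p
      exact le_rfl
    · intro hc
      replace hc := Set.mem_singleton_iff.mp hc
      have := congrArg (fun z => z.1.2) hc
      simp only at this
      omega
  have hx := hI hchain hy
  replace hx := Set.mem_symmDiff.mp hx
  rcases hx with ⟨-, hx1⟩ | ⟨-, hx2⟩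
  · exact hx1 rfl
  · exact hx2 (show g p ≤ i from hlt'.le)

lemma not_ideal_gt {g : P → ℤ} (hmem : ∀ q, g q ∈ R q) (x₀ : GammaSet R hR)
    (hgt : Rgt R x₀.1.1 x₀.1.2 < g x₀.1.1) :
    ¬ IsIdealG R hR (symmDiff {x : GammaSet R hR | g x.1.1 ≤ x.1.2} {x₀}) := by
  intro hI
  obtain ⟨⟨p, i⟩, hiR, hine⟩ := x₀
  have hgt' : Rgt R p i < g p := hgt
  clear hgt
  have hile : i ≤ Rgt R p i := le_Rgt R p i
  have hig : i < g p := by omega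
  obtain ⟨hRgtR, hiRgt⟩ := Rgt_mem R (hmem p) hig
  have hRgtne : Rgt R p i ≠ (R p).max' (hR p) := by
    have : g p ≤ (R p).max' (hR p) := Finset.le_max' _ _ (hmem p)
    omega
  have hrel : GammaRel R hR ⟨(p, Rgt R p i), hRgtR, hRgtne⟩ ⟨(p, i), hiR, hine⟩ :=
    Or.inl ⟨rfl, hiRgt, fun z hz hiz => Rgt_le R hz hiz⟩
  have hy : (⟨(p, i), hiR, hine⟩ : GammaSet R hR) ∈
      symmDiff {x : GammaSet R hR | g x.1.1 ≤ x.1.2} {(⟨(p, i), hiR, hine⟩ : GammaSet R hR)} := by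
    apply Set.mem_symmDiff.mpr
    right
    constructor
    · rfl
    · intro hc
      have hc' : g p ≤ i := hc
      omega
  have hx := hI (Relation.ReflTransGen.single hrel) hy
  replace hx := Set.mem_symmDiff.mp hx
  rcases hx with ⟨hx1, -⟩ | ⟨hx3, -⟩
  · have : g p ≤ Rgt R p i := hx1
    omega
  · replace hx3 := Set.mem_singleton_iff.mp hx3
    have := congrArg (fun z => z.1.2) hx3
    simp only at this
    omega

lemma symmDiff_phi {g : P → ℤ} (x₀ : GammaSet R hR) (v : ℤ)
    (hiff : ∀ k ∈ R x₀.1.1, k ≠ x₀.1.2 → (g x₀.1.1 ≤ k ↔ v ≤ k))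
    (hflip : g x₀.1.1 ≤ x₀.1.2 ↔ ¬ v ≤ x₀.1.2) :
    symmDiff {x : GammaSet R hR | g x.1.1 ≤ x.1.2} {x₀}
      = {x : GammaSet R hR | Function.update g x₀.1.1 v x.1.1 ≤ x.1.2} := by
  ext x
  rw [Set.mem_symmDiff]
  by_cases hq : x.1.1 = x₀.1.1
  · by_cases hk : x.1.2 = x₀.1.2
    · have hx : x = x₀ := Subtype.ext (Prod.ext hq hk)
      subst hx
      constructor
      · rintro (⟨-, h2⟩ | ⟨-, h3⟩)
        · exact absurd rfl h2
        · show Function.update g x.1.1 v x.1.1 ≤ x.1.2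
          rw [Function.update_self]
          by_contra hc
          exact h3 (hflip.mpr hc)
      · intro h
        right
        refine ⟨rfl, fun hc => ?_⟩
        have hc' : g x.1.1 ≤ x.1.2 := hc
        have hv : v ≤ x.1.2 := by
          have h' : Function.update g x.1.1 v x.1.1 ≤ x.1.2 := h
          rwa [Function.update_self] at h'
        exact (hflip.mp hc') hv
    · have hne : x ≠ x₀ := fun h => hk (congrArg (fun z => z.1.2) h)
      have hmem : x.1.2 ∈ R x₀.1.1 := hq ▸ x.2.1
      have hiff' := hiff x.1.2 hmem hk
      constructor
      · rintro (⟨h1, -⟩ | ⟨h2, -⟩)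
        · show Function.update g x₀.1.1 v x.1.1 ≤ x.1.2
          rw [Function.update_apply, if_pos hq]
          have h1' : g x.1.1 ≤ x.1.2 := h1
          rw [hq] at h1'
          exact hiff'.mp h1'
        · exact absurd h2 hne
      · intro h
        have h' : Function.update g x₀.1.1 v x.1.1 ≤ x.1.2 := h
        rw [Function.update_apply, if_pos hq] at h'
        left
        refine ⟨?_, hne⟩
        show g x.1.1 ≤ x.1.2
        rw [hq]
        exact hiff'.mpr h'
  · have hne : x ≠ x₀ := fun h => hq (congrArg (fun z => z.1.1) h)
    constructor
    · rintro (⟨h1, -⟩ | ⟨h2, -⟩)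
      · show Function.update g x₀.1.1 v x.1.1 ≤ x.1.2
        rw [Function.update_apply, if_neg hq]
        exact h1
      · exact absurd h2 hne
    · intro h
      have h' : Function.update g x₀.1.1 v x.1.1 ≤ x.1.2 := h
      rw [Function.update_apply, if_neg hq] at h'
      exact Or.inl ⟨h', hne⟩

lemma Rgt_pos (x₀ : GammaSet R hR) :
    Rgt R x₀.1.1 x₀.1.2 ∈ R x₀.1.1 ∧ x₀.1.2 < Rgt R x₀.1.1 x₀.1.2 := by
  obtain ⟨k, hk, hik⟩ := exists_gt_of_ne_max R hR x₀.2.1 x₀.2.2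
  exact Rgt_mem R hk hik

lemma symmDiff_up {g : P → ℤ} (x₀ : GammaSet R hR) (hgp : g x₀.1.1 = x₀.1.2) :
    symmDiff {x : GammaSet R hR | g x.1.1 ≤ x.1.2} {x₀}
      = {x : GammaSet R hR |
          Function.update g x₀.1.1 (Rgt R x₀.1.1 x₀.1.2) x.1.1 ≤ x.1.2} := by
  obtain ⟨hRmem, hiRgt⟩ := Rgt_pos R hR x₀
  apply symmDiff_phi
  · intro k hkR hkne
    rcases lt_or_gt_of_ne hkne with hlt | hgt2
    · rw [hgp]; omega
    · have h2 := Rgt_le R hkR hgt2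
      rw [hgp]; omega
  · rw [hgp]; omega

lemma symmDiff_down {g : P → ℤ} (x₀ : GammaSet R hR)
    (hgp : g x₀.1.1 = Rgt R x₀.1.1 x₀.1.2) :
    symmDiff {x : GammaSet R hR | g x.1.1 ≤ x.1.2} {x₀}
      = {x : GammaSet R hR | Function.update g x₀.1.1 x₀.1.2 x.1.1 ≤ x.1.2} := by
  obtain ⟨hRmem, hiRgt⟩ := Rgt_pos R hR x₀
  apply symmDiff_phi
  · intro k hkR hkne
    rcases lt_or_gt_of_ne hkne with hlt | hgt2
    · rw [hgp]; omega
    · have h2 := Rgt_le R hkR hgt2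
      rw [hgp]; omega
  · rw [hgp]; omega

lemma gbk_cases (i : ℤ) (f : P → ℤ) (q : P) :
    gbk R i f q = f q ∨
    (f q = i ∧ IncLabel R (Function.update f q (Rgt R q i)) ∧ gbk R i f q = Rgt R q i) ∨
    (f q = Rgt R q i ∧ IncLabel R (Function.update f q i) ∧ gbk R i f q = i) := by
  unfold gbk
  by_cases h1 : f q = i ∧ IncLabel R (Function.update f q (Rgt R q i))
  · exact Or.inr (Or.inl ⟨h1.1, h1.2, by rw [if_pos h1]⟩)
  · rw [if_neg h1]
    by_cases h2 : f q = Rgt R q i ∧ IncLabel R (Function.update f q i)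
    · exact Or.inr (Or.inr ⟨h2.1, h2.2, by rw [if_pos h2]⟩)
    · rw [if_neg h2]; exact Or.inl rfl

lemma gbk_mem {i : ℤ} {f : P → ℤ} (hf : ∀ p, f p ∈ R p) (q : P) : gbk R i f q ∈ R q := by
  rcases gbk_cases R i f q with h | ⟨-, hinc, h⟩ | ⟨-, hinc, h⟩
  · rw [h]; exact hf q
  · rw [h]; have := hinc.1 q; rwa [Function.update_self] at this
  · rw [h]; have := hinc.1 q; rwa [Function.update_self] at this

lemma update_lt_of_incLabel {f : P → ℤ} {p : P} {v : ℤ}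
    (h : IncLabel R (Function.update f p v)) {q : P} :
    (q < p → f q < v) ∧ (p < q → v < f q) := by
  constructor
  · intro hq
    have h2 := h.2 hq
    rwa [Function.update_of_ne (ne_of_lt hq), Function.update_self] at h2
  · intro hq
    have h2 := h.2 hq
    rwa [Function.update_self, Function.update_of_ne (ne_of_gt hq)] at h2

lemma gbk_pw {i : ℤ} {f : P → ℤ} (hf : IncLabel R f) {q₁ q₂ : P} (h12 : q₁ < q₂)
    {v₁ v₂ : ℤ} (h1 : v₁ = f q₁ ∨ v₁ = gbk R i f q₁) (h2 : v₂ = f q₂ ∨ v₂ = gbk R i f q₂) :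
    v₁ < v₂ := by
  have hff : f q₁ < f q₂ := hf.2 h12
  rcases gbk_cases R i f q₁ with e1 | ⟨ha1, hi1, e1⟩ | ⟨hb1, hi1, e1⟩ <;>
    rcases gbk_cases R i f q₂ with e2 | ⟨ha2, hi2, e2⟩ | ⟨hb2, hi2, e2⟩
  · rcases h1 with rfl | h1 <;> rcases h2 with rfl | h2 <;> rw [e1] at * <;> rw [e2] at * <;> omega
  · have hle := le_Rgt R q₂ i
    rcases h1 with rfl | h1 <;> rcases h2 with rfl | h2 <;> rw [e1] at * <;> rw [e2] at * <;> omega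
  · have hlt := (update_lt_of_incLabel R hi2).1 h12
    rcases h1 with rfl | h1 <;> rcases h2 with rfl | h2 <;> rw [e1] at * <;> rw [e2] at * <;> omega
  · have hlt := (update_lt_of_incLabel R hi1).2 h12
    rcases h1 with rfl | h1 <;> rcases h2 with rfl | h2 <;> rw [e1] at * <;> rw [e2] at * <;> omega
  · rw [ha1, ha2] at hff; omega
  · have hlt := (update_lt_of_incLabel R hi2).1 h12
    rw [ha1] at hlt; omega
  · have hle := le_Rgt R q₁ i
    rcases h1 with rfl | h1 <;> rcases h2 with rfl | h2 <;> rw [e1] at * <;> rw [e2] at * <;> omega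
  · have hle := le_Rgt R q₁ i
    rw [hb1] at hff; rw [ha2] at hff; omega
  · have hlt := (update_lt_of_incLabel R hi2).1 h12
    have hle := le_Rgt R q₁ i
    rw [hb1] at hlt; omega

lemma gbk_incLabel {i : ℤ} {f : P → ℤ} (hf : IncLabel R f) : IncLabel R (gbk R i f) :=
  ⟨gbk_mem R hf.1, fun _ _ h => gbk_pw R hf h (Or.inr rfl) (Or.inr rfl)⟩

lemma update_iff {i : ℤ} {f : P → ℤ} (hf : IncLabel R f) (p : P) (v : ℤ) (hv : v ∈ R p)
    (g : P → ℤ) (hg : ∀ q, g q = f q ∨ g q = gbk R i f q)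
    (hRgt : i < Rgt R p i)
    (hcase : (f p = i ∧ v = Rgt R p i) ∨ (f p = Rgt R p i ∧ v = i)) :
    IncLabel R (Function.update f p v) ↔ IncLabel R (Function.update g p v) := by
  have hgmem : ∀ q, g q ∈ R q := by
    intro q
    rcases hg q with h | h
    · rw [h]; exact hf.1 q
    · rw [h]; exact gbk_mem R hf.1 q
  have hginc : ∀ q₁ q₂ : P, q₁ < q₂ → g q₁ < g q₂ :=
    fun q₁ q₂ h => gbk_pw R hf h (hg q₁) (hg q₂)
  have key : ∀ q₁ q₂ : P, q₁ < q₂ →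
      (Function.update f p v q₁ < Function.update f p v q₂ ↔
       Function.update g p v q₁ < Function.update g p v q₂) := by
    intro q₁ q₂ h
    rcases eq_or_ne q₁ p with rfl | hne1
    · rw [Function.update_self, Function.update_self,
        Function.update_of_ne (ne_of_gt h), Function.update_of_ne (ne_of_gt h)]
      rcases hg q₂ with he | he
      · rw [he]
      · rcases gbk_cases R i f q₂ with e2 | ⟨ha2, hi2, e2⟩ | ⟨hb2, hi2, e2⟩
        · rw [he, e2]
        · have hlt := hf.2 h
          rcases hcase with ⟨hfp, -⟩ | ⟨hfp, -⟩
          · rw [hfp, ha2] at hlt; omega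
          · rw [hfp, ha2] at hlt; omega
        · have hlt := (update_lt_of_incLabel R hi2).1 h
          rcases hcase with ⟨hfp, -⟩ | ⟨hfp, -⟩
          · rw [hfp] at hlt; omega
          · rw [hfp] at hlt; omega
    · rcases eq_or_ne q₂ p with rfl | hne2
      · rw [Function.update_of_ne hne1, Function.update_of_ne hne1,
          Function.update_self, Function.update_self]
        rcases hg q₁ with he | he
        · rw [he]
        · rcases gbk_cases R i f q₁ with e1 | ⟨ha1, hi1, e1⟩ | ⟨hb1, hi1, e1⟩
          · rw [he, e1]
          · rcases hcase with ⟨hfp, hv'⟩ | ⟨hfp, hv'⟩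
            · have hlt := hf.2 h; rw [ha1, hfp] at hlt; omega
            · rw [he, e1, hv', ha1]
              have hle := le_Rgt R q₁ i
              omega
          · rcases hcase with ⟨hfp, hv'⟩ | ⟨hfp, hv'⟩
            · have hlt := hf.2 h
              rw [hfp] at hlt
              have hle := le_Rgt R q₁ i
              rw [hb1] at hlt; omega
            · rw [he, e1, hv', hb1]
              have hle := le_Rgt R q₁ i
              omega
      · rw [Function.update_of_ne hne1, Function.update_of_ne hne2,
          Function.update_of_ne hne1, Function.update_of_ne hne2]
        exact iff_of_true (hf.2 h) (hginc _ _ h)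
  constructor
  · rintro ⟨-, hs⟩
    refine ⟨fun q => ?_, fun q₁ q₂ h => (key q₁ q₂ h).1 (hs h)⟩
    rcases eq_or_ne q p with rfl | hne
    · rwa [Function.update_self]
    · rw [Function.update_of_ne hne]; exact hgmem q
  · rintro ⟨-, hs⟩
    refine ⟨fun q => ?_, fun q₁ q₂ h => (key q₁ q₂ h).2 (hs h)⟩
    rcases eq_or_ne q p with rfl | hne
    · rwa [Function.update_self]
    · rw [Function.update_of_ne hne]; exact hf.1 q

lemma toggle_step [Fintype P] (hcons : Consistent R hR) {i : ℤ} {f : P → ℤ}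
    (hf : IncLabel R f) (x₀ : GammaSet R hR) (hx₀ : x₀.1.2 = i)
    (g : P → ℤ) (hg : ∀ q, g q = f q ∨ g q = gbk R i f q) (hgp : g x₀.1.1 = f x₀.1.1) :
    toggleG R hR x₀ {x : GammaSet R hR | g x.1.1 ≤ x.1.2}
      = {x : GammaSet R hR |
          Function.update g x₀.1.1 (gbk R i f x₀.1.1) x.1.1 ≤ x.1.2} := by
  subst hx₀
  have hgmem : ∀ q, g q ∈ R q := by
    intro q
    rcases hg q with h | h
    · rw [h]; exact hf.1 q
    · rw [h]; exact gbk_mem R hf.1 q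
  obtain ⟨hRmem, hiRgt⟩ := Rgt_pos R hR x₀
  by_cases hfi : f x₀.1.1 = x₀.1.2
  · have hgpi : g x₀.1.1 = x₀.1.2 := by rw [hgp, hfi]
    have hsd := symmDiff_up R hR x₀ hgpi
    rw [toggleG, hsd]
    have hidiff := update_iff R hf x₀.1.1 (Rgt R x₀.1.1 x₀.1.2) hRmem g hg hiRgt
      (Or.inl ⟨hfi, rfl⟩)
    by_cases hc : IncLabel R (Function.update f x₀.1.1 (Rgt R x₀.1.1 x₀.1.2))
    · have hideal := ideal_of_incLabel R hR (hidiff.mp hc)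
      rw [if_pos hideal]
      have hgbk : gbk R x₀.1.2 f x₀.1.1 = Rgt R x₀.1.1 x₀.1.2 := by
        unfold gbk
        rw [if_pos ⟨hfi, hc⟩]
      rw [hgbk]
    · have hnideal : ¬ IsIdealG R hR
          {x : GammaSet R hR |
            Function.update g x₀.1.1 (Rgt R x₀.1.1 x₀.1.2) x.1.1 ≤ x.1.2} := by
        intro hid
        refine hc (hidiff.mpr (incLabel_of_ideal R hR hcons ?_ hid))
        intro q
        rcases eq_or_ne q x₀.1.1 with rfl | hne
        · rwa [Function.update_self]
        · rw [Function.update_of_ne hne]; exact hgmem q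
      rw [if_neg hnideal]
      have hgbk : gbk R x₀.1.2 f x₀.1.1 = f x₀.1.1 := by
        unfold gbk
        rw [if_neg (fun hh => hc hh.2), if_neg ?_]
        rintro ⟨hh1, -⟩
        rw [hfi] at hh1
        omega
      rw [hgbk, ← hgp, Function.update_eq_self]
  · by_cases hfr : f x₀.1.1 = Rgt R x₀.1.1 x₀.1.2
    · have hgpr : g x₀.1.1 = Rgt R x₀.1.1 x₀.1.2 := by rw [hgp, hfr]
      have hsd := symmDiff_down R hR x₀ hgpr
      rw [toggleG, hsd]
      have hidiff := update_iff R hf x₀.1.1 x₀.1.2 x₀.2.1 g hg hiRgt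
        (Or.inr ⟨hfr, rfl⟩)
      by_cases hc : IncLabel R (Function.update f x₀.1.1 x₀.1.2)
      · have hideal := ideal_of_incLabel R hR (hidiff.mp hc)
        rw [if_pos hideal]
        have hgbk : gbk R x₀.1.2 f x₀.1.1 = x₀.1.2 := by
          unfold gbk
          rw [if_neg (fun hh => hfi hh.1), if_pos ⟨hfr, hc⟩]
        rw [hgbk]
      · have hnideal : ¬ IsIdealG R hR
            {x : GammaSet R hR |
              Function.update g x₀.1.1 x₀.1.2 x.1.1 ≤ x.1.2} := by
          intro hid
          refine hc (hidiff.mpr (incLabel_of_ideal R hR hcons ?_ hid))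
          intro q
          rcases eq_or_ne q x₀.1.1 with rfl | hne
          · rw [Function.update_self]; exact x₀.2.1
          · rw [Function.update_of_ne hne]; exact hgmem q
        rw [if_neg hnideal]
        have hgbk : gbk R x₀.1.2 f x₀.1.1 = f x₀.1.1 := by
          unfold gbk
          rw [if_neg (fun hh => hfi hh.1), if_neg (fun hh => hc hh.2)]
        rw [hgbk, ← hgp, Function.update_eq_self]
    · have hgbk : gbk R x₀.1.2 f x₀.1.1 = f x₀.1.1 := by
        unfold gbk
        rw [if_neg (fun hh => hfi hh.1), if_neg (fun hh => hfr hh.1)]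
      rw [hgbk, ← hgp, Function.update_eq_self, toggleG, if_neg ?_]
      rcases lt_or_gt_of_ne hfi with hlt | hgt
      · exact not_ideal_lt R hR hgmem x₀ (by rw [hgp]; exact hlt)
      · have h1 : Rgt R x₀.1.1 x₀.1.2 ≤ f x₀.1.1 := Rgt_le R (hf.1 x₀.1.1) hgt
        refine not_ideal_gt R hR hgmem x₀ ?_
        rw [hgp]
        rcases eq_or_lt_of_le h1 with he | hl
        · exact absurd he.symm hfr
        · exact hl

lemma foldr_toggles [Fintype P] (hcons : Consistent R hR) {i : ℤ} {f : P → ℤ}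
    (hf : IncLabel R f) :
    ∀ L : List (GammaSet R hR), L.Nodup → (∀ x ∈ L, x.1.2 = i) →
    L.foldr (fun x g => toggleG R hR x ∘ g) id {x : GammaSet R hR | f x.1.1 ≤ x.1.2}
      = {x : GammaSet R hR |
          (fun q => if ∃ y ∈ L, y.1.1 = q then gbk R i f q else f q) x.1.1 ≤ x.1.2} := by
  intro L
  induction L with
  | nil =>
    intro _ _
    simp only [List.foldr_nil, id_eq, List.not_mem_nil, false_and, exists_false, if_false]
  | cons x L ih =>
    intro hnd hall
    have hndL := (List.nodup_cons.1 hnd).2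
    have hxL := (List.nodup_cons.1 hnd).1
    have hallL : ∀ y ∈ L, y.1.2 = i := fun y hy => hall y (List.mem_cons_of_mem _ hy)
    have hfold : (x :: L).foldr (fun x g => toggleG R hR x ∘ g) id
          {x : GammaSet R hR | f x.1.1 ≤ x.1.2}
        = toggleG R hR x (L.foldr (fun x g => toggleG R hR x ∘ g) id
            {x : GammaSet R hR | f x.1.1 ≤ x.1.2}) := rfl
    rw [hfold, ih hndL hallL]
    set g : P → ℤ := fun q => if ∃ y ∈ L, y.1.1 = q then gbk R i f q else f q with hgdef
    have hg : ∀ q, g q = f q ∨ g q = gbk R i f q := by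
      intro q
      rw [hgdef]
      dsimp only
      split
      · exact Or.inr rfl
      · exact Or.inl rfl
    have hgp : g x.1.1 = f x.1.1 := by
      rw [hgdef]
      dsimp only
      rw [if_neg ?_]
      rintro ⟨y, hyL, hyq⟩
      have hy2 : y.1.2 = x.1.2 := by
        rw [hallL y hyL, hall x (List.mem_cons_self)]
      have : y = x := Subtype.ext (Prod.ext hyq hy2)
      exact hxL (this ▸ hyL)
    rw [toggle_step R hR hcons hf x (hall x (List.mem_cons_self)) g hg hgp]
    have hupd : Function.update g x.1.1 (gbk R i f x.1.1)
        = fun q => if ∃ y ∈ x :: L, y.1.1 = q then gbk R i f q else f q := by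
      funext q
      rcases eq_or_ne q x.1.1 with rfl | hne
      · rw [Function.update_self, if_pos ⟨x, List.mem_cons_self, rfl⟩]
      · rw [Function.update_of_ne hne, hgdef]
        dsimp only
        by_cases hex : ∃ y ∈ L, y.1.1 = q
        · obtain ⟨y, hy, he⟩ := hex
          rw [if_pos ⟨y, hy, he⟩, if_pos ⟨y, List.mem_cons_of_mem _ hy, he⟩]
        · rw [if_neg hex, if_neg ?_]
          rintro ⟨y, hy, he⟩
          rcases List.mem_cons.1 hy with rfl | hyL
          · exact hne he.symm
          · exact hex ⟨y, hyL, he⟩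
    rw [hupd]

lemma part1 [Fintype P] (hcons : Consistent R hR)
    (T : ℤ → List (GammaSet R hR))
    (hT : ∀ i : ℤ, (T i).Nodup ∧ ∀ x : GammaSet R hR, x ∈ T i ↔ x.1.2 = i)
    (i : ℤ) (f : P → ℤ) (hf : IncLabel R f) :
    {x : GammaSet R hR | gbk R i f x.1.1 ≤ x.1.2} =
      (T i).foldr (fun x g => toggleG R hR x ∘ g) id
        {x : GammaSet R hR | f x.1.1 ≤ x.1.2} := by
  rw [foldr_toggles R hR hcons hf (T i) (hT i).1 (fun x hx => ((hT i).2 x).1 hx)]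
  have hfun : (fun q => if ∃ y ∈ T i, y.1.1 = q then gbk R i f q else f q)
      = gbk R i f := by
    funext q
    split
    · rfl
    · rename_i hex
      have hq : ¬ (i ∈ R q ∧ i ≠ (R q).max' (hR q)) := by
        rintro ⟨h1, h2⟩
        exact hex ⟨⟨(q, i), h1, h2⟩, ((hT i).2 _).2 rfl, rfl⟩
      rcases gbk_cases R i f q with e | ⟨ha, hi, e⟩ | ⟨hb, hi, e⟩
      · rw [e]
      · have h1 : i ∈ R q := ha ▸ hf.1 q
        have h2 : i = (R q).max' (hR q) := by
          by_contra hc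
          exact hq ⟨h1, hc⟩
        have h3 : Rgt R q i = i := by
          rw [Rgt, dif_neg ?_]
          rintro ⟨k, hk⟩
          rw [Finset.mem_filter] at hk
          have := Finset.le_max' (R q) k hk.1
          omega
        rw [e, h3, ha]
      · have h1 : i ∈ R q := by
          have := hi.1 q
          rwa [Function.update_self] at this
        have h2 : i = (R q).max' (hR q) := by
          by_contra hc
          exact hq ⟨h1, hc⟩
        have h3 : Rgt R q i = i := by
          rw [Rgt, dif_neg ?_]
          rintro ⟨k, hk⟩
          rw [Finset.mem_filter] at hk
          have := Finset.le_max' (R q) k hk.1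
          omega
        rw [e, hb, h3]
  rw [hfun]

lemma foldl_comp_apply {α : Type*} (F : ℤ → Set α → Set α) :
    ∀ (L : List ℤ) (G : Set α → Set α) (s : Set α),
    L.foldl (fun g i => F i ∘ g) G s = L.foldl (fun s i => F i s) (G s) := by
  intro L
  induction L with
  | nil => intro G s; rfl
  | cons i L ih => intro G s; exact ih (F i ∘ G) s

lemma part2_gen [Fintype P] (hcons : Consistent R hR)
    (T : ℤ → List (GammaSet R hR))
    (hT : ∀ i : ℤ, (T i).Nodup ∧ ∀ x : GammaSet R hR, x ∈ T i ↔ x.1.2 = i) :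
    ∀ (L : List ℤ) (f : P → ℤ), IncLabel R f →
    {x : GammaSet R hR | (L.foldl (fun g i => gbk R i g) f) x.1.1 ≤ x.1.2}
      = L.foldl (fun s i => (T i).foldr (fun x g' => toggleG R hR x ∘ g') id s)
          {x : GammaSet R hR | f x.1.1 ≤ x.1.2} := by
  intro L
  induction L with
  | nil => intro f _; rfl
  | cons i L ih =>
    intro f hf
    rw [List.foldl_cons, List.foldl_cons, ih (gbk R i f) (gbk_incLabel R hf),
      ← part1 R hR hcons T hT i f hf]

end BK

/-- The bijection `φ(f) = {(p,k) ∈ Γ(P,R) : f p ≤ k}` intertwines the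
generalized Bender-Knuth involution `ρ_i` with the toggle operator `T^i`
(the composition, in any order, of the toggles `t_{(p,i)}`); consequently it
intertwines increasing-labeling promotion `Pro = ρ_b ∘ ⋯ ∘ ρ_a` with
toggle-promotion `TogPro_{H_Γ} = T^b ∘ ⋯ ∘ T^a`, where `[a,b]` contains all
labels of all sets `R(p)`. -/
theorem stmt18 {P : Type*} [Fintype P] [PartialOrder P] [DecidableEq P]
    (R : P → Finset ℤ) (hR : ∀ p, (R p).Nonempty) (hcons : Consistent R hR)
    (a b : ℤ) (hab : ∀ p : P, ∀ k ∈ R p, a ≤ k ∧ k ≤ b)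
    (T : ℤ → List (GammaSet R hR))
    (hT : ∀ i : ℤ, (T i).Nodup ∧ ∀ x : GammaSet R hR, x ∈ T i ↔ x.1.2 = i) :
    (∀ i : ℤ, ∀ f : P → ℤ, IncLabel R f →
      {x : GammaSet R hR | gbk R i f x.1.1 ≤ x.1.2} =
        (T i).foldr (fun x g => toggleG R hR x ∘ g) id
          {x : GammaSet R hR | f x.1.1 ≤ x.1.2}) ∧
    (∀ f : P → ℤ, IncLabel R f →
      {x : GammaSet R hR |
          (((List.range (b + 1 - a).toNat).map fun j => a + (j : ℤ)).foldl
            (fun g i => gbk R i g) f) x.1.1 ≤ x.1.2} =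
        (((List.range (b + 1 - a).toNat).map fun j => a + (j : ℤ)).foldl
            (fun g i => ((T i).foldr (fun x g' => toggleG R hR x ∘ g') id) ∘ g) id)
          {x : GammaSet R hR | f x.1.1 ≤ x.1.2}) := by
  constructor
  · exact fun i f hf => part1 R hR hcons T hT i f hf
  · intro f hf
    rw [foldl_comp_apply (fun i => (T i).foldr (fun x g' => toggleG R hR x ∘ g') id)]
    exact part2_gen R hR hcons T hT _ f hf
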